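/- In every connected loop diagram, every external vertex is labeled B or b. (Combinatorial content of Corollary 2: any connected loop diagram possessing an external leg whose field is different from B and b vanishes; in this gauge no such diagram can be drawn.) -/

import Mathlib

/-!  Feynman-diagram combinatorics of 4D topological Yang–Mills theory
in the (anti-)self-dual Landau gauges. -/

/-- The ten field labels. -/
inductive Fld : Type
  | A | psi | chibar | c | cbar | phi | phibar | etabar | B | b
  deriving DecidableEq

/-- The seven allowed interaction-vertex types (multisets of labels). -/
def vertexTypes : List (Multiset Fld) :=
  [ {Fld.B, Fld.A, Fld.A}
  , {Fld.chibar, Fld.A, Fld.c}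
  , {Fld.A, Fld.psi, Fld.chibar}
  , {Fld.A, Fld.cbar, Fld.c}
  , {Fld.A, Fld.phibar, Fld.phi}
  , {Fld.phibar, Fld.c, Fld.psi}
  , {Fld.chibar, Fld.c, Fld.A, Fld.A} ]

/-- The six allowed propagator types (unordered pairs of labels). -/
def propTypes : List (Multiset Fld) :=
  [ {Fld.c, Fld.cbar}
  , {Fld.chibar, Fld.psi}
  , {Fld.etabar, Fld.psi}
  , {Fld.phi, Fld.phibar}
  , {Fld.A, Fld.B}
  , {Fld.A, Fld.b} ]

/-- A Feynman diagram: a finite set `H` of half-edges labelled by fields,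
partitioned into vertices (the fibers of `vtx`), each vertex being an
interaction vertex of one of the seven allowed types or an external vertex
(a single half-edge), together with a perfect matching `mu` whose matched
pairs realize one of the six allowed propagator types. -/
structure Diagram where
  H : Type
  V : Type
  [fintypeH : Fintype H]
  [decEqH : DecidableEq H]
  [fintypeV : Fintype V]
  [decEqV : DecidableEq V]
  vtx : H → V
  vtx_surj : Function.Surjective vtx
  lab : H → Fld
  mu : H → H
  mu_invol : Function.Involutive mu
  mu_ne : ∀ h, mu h ≠ h
  prop_ok : ∀ h, ({lab h, lab (mu h)} : Multiset Fld) ∈ propTypes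
  vtx_ok : ∀ v : V,
      ((Finset.univ.filter (fun h => vtx h = v)).val.map lab) ∈ vertexTypes
      ∨ ∃ h, Finset.univ.filter (fun h' => vtx h' = v) = {h}

attribute [instance] Diagram.fintypeH Diagram.decEqH Diagram.fintypeV Diagram.decEqV

namespace Diagram

variable (D : Diagram)

/-- The set of half-edges belonging to a vertex. -/
def fiber (v : D.V) : Finset D.H := Finset.univ.filter (fun h => D.vtx h = v)

/-- The multiset of field labels carried by a vertex. -/
def labels (v : D.V) : Multiset Fld := (D.fiber v).val.map D.lab

/-- An external vertex: a single half-edge (an external leg). -/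
def IsExternal (v : D.V) : Prop := ∃ h, D.fiber v = {h}

/-- An interaction vertex: its labels form one of the seven allowed types. -/
def IsInteraction (v : D.V) : Prop := D.labels v ∈ vertexTypes

/-- Adjacency of the multigraph of the diagram. -/
def Adj (v w : D.V) : Prop := ∃ h, D.vtx h = v ∧ D.vtx (D.mu h) = w

/-- Connectedness of the multigraph of the diagram. -/
def Connected : Prop := ∀ v w : D.V, Relation.ReflTransGen D.Adj v w

/-- A cycle of the multigraph: a closed walk `e 0, e 1, …, e (n-1)` of
half-edges (each matched pair `{e i, mu (e i)}` being the traversed edge),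
of positive length, with pairwise distinct edges and pairwise distinct
vertices. -/
structure Cycle where
  n : ℕ
  npos : 0 < n
  e : ZMod n → D.H
  step : ∀ i, D.vtx (D.mu (e i)) = D.vtx (e (i + 1))
  edges_distinct : ∀ i j, i ≠ j → e i ≠ e j ∧ e i ≠ D.mu (e j)
  vtx_inj : Function.Injective fun i => D.vtx (e i)

/-- A loop diagram: the multigraph contains a cycle. -/
def IsLoopDiagram : Prop := Nonempty D.Cycle

end Diagram


/-! ### Auxiliary machinery -/

instance : Fintype Fld :=
  ⟨⟨↑[Fld.A, Fld.psi, Fld.chibar, Fld.c, Fld.cbar, Fld.phi, Fld.phibar, Fld.etabar, Fld.B, Fld.b],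
    by decide⟩, fun x => by cases x <;> decide⟩

namespace TopYM

/-- Negative fields: each propagator has exactly one negative end. -/
def isNeg : Fld → Bool
  | .B => true | .b => true | .chibar => true | .etabar => true
  | .cbar => true | .phibar => true | _ => false

/-- A conserved weight: 0 on propagators and interaction vertices. -/
def wt : Fld → ℤ
  | .c => 1 | .psi => 1 | .cbar => -1 | .chibar => -1 | .etabar => -1
  | .phi => 2 | .phibar => -2 | _ => 0

lemma prop_pair : ∀ x y : Fld, ({x, y} : Multiset Fld) ∈ propTypes →
    (isNeg x = !isNeg y) ∧ wt x + wt y = 0 := by decide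

lemma vtype_neg : ∀ m ∈ vertexTypes,
    Multiset.countP (fun f => isNeg f = true) m = 1 := by decide

lemma vtype_wt : ∀ m ∈ vertexTypes, (Multiset.map wt m).sum = 0 := by decide

lemma neg_wt_nonpos : ∀ f : Fld, isNeg f = true → wt f ≤ 0 := by decide

lemma neg_wt_zero : ∀ f : Fld, isNeg f = true → wt f = 0 →
    f = Fld.B ∨ f = Fld.b := by decide

variable (D : Diagram)

lemma neg_mu (h : D.H) : isNeg (D.lab h) = !isNeg (D.lab (D.mu h)) :=
  (prop_pair _ _ (D.prop_ok h)).1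

lemma wt_mu (h : D.H) : wt (D.lab h) + wt (D.lab (D.mu h)) = 0 :=
  (prop_pair _ _ (D.prop_ok h)).2

lemma mu_neg {h : D.H} (hh : ¬ isNeg (D.lab h) = true) :
    isNeg (D.lab (D.mu h)) = true := by
  have := neg_mu D h
  cases hb : isNeg (D.lab (D.mu h)) <;> simp_all

lemma mem_fiber {h : D.H} {v : D.V} : h ∈ D.fiber v ↔ D.vtx h = v := by
  simp [Diagram.fiber]

/-- Every vertex carries at most one negative half-edge. -/
lemma negCard_le (v : D.V) :
    ((D.fiber v).filter (fun h => isNeg (D.lab h) = true)).card ≤ 1 := by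
  rcases D.vtx_ok v with hint | ⟨h0, hh0⟩
  · have h1 := vtype_neg _ hint
    rw [Multiset.countP_map] at h1
    exact le_of_eq h1
  · have : D.fiber v = {h0} := hh0
    calc ((D.fiber v).filter (fun h => isNeg (D.lab h) = true)).card
        ≤ (D.fiber v).card := Finset.card_filter_le _ _
      _ = 1 := by rw [this, Finset.card_singleton]

lemma neg_unique {v : D.V} {h1 h2 : D.H} (a1 : D.vtx h1 = v) (a2 : D.vtx h2 = v)
    (b1 : isNeg (D.lab h1) = true) (b2 : isNeg (D.lab h2) = true) : h1 = h2 := by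
  have m1 : h1 ∈ (D.fiber v).filter (fun h => isNeg (D.lab h) = true) := by
    simp [mem_fiber, Diagram.fiber, a1, b1]
  have m2 : h2 ∈ (D.fiber v).filter (fun h => isNeg (D.lab h) = true) := by
    simp [mem_fiber, Diagram.fiber, a2, b2]
  exact Finset.card_le_one.mp (negCard_le D v) _ m1 _ m2

/-- Every interaction vertex carries a negative half-edge. -/
lemma interaction_neg {v : D.V} (hint : D.labels v ∈ vertexTypes) :
    ∃ h, D.vtx h = v ∧ isNeg (D.lab h) = true := by
  have h1 := vtype_neg _ hint
  simp only [Diagram.labels] at h1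
  rw [Multiset.countP_map] at h1
  have hpos : (Multiset.filter (fun a => isNeg (D.lab a) = true) (D.fiber v).val) ≠ 0 := by
    intro h0
    rw [h0] at h1
    simp at h1
  obtain ⟨h, hm⟩ := Multiset.exists_mem_of_ne_zero hpos
  rw [Multiset.mem_filter] at hm
  exact ⟨h, (mem_fiber D).mp hm.1, hm.2⟩

/-- Directed adjacency: the edge through `h` points towards its negative end. -/
def Dir (x y : D.V) : Prop :=
  ∃ h, D.vtx h = x ∧ D.vtx (D.mu h) = y ∧ isNeg (D.lab (D.mu h)) = true

/-- Reachability from the cycle by directed edges. -/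
def Reach (K : D.Cycle) (v : D.V) : Prop :=
  ∃ i, Relation.ReflTransGen (Dir D) (D.vtx (K.e i)) v

end TopYM

/-- combinatorial content of Corollary 2. In every connected
loop diagram, every external vertex is labeled `B` or `b`. -/
theorem external_legs_of_loop_diagram_are_B_or_b (D : Diagram)
    (hconn : D.Connected) (hloop : D.IsLoopDiagram) :
    ∀ v : D.V, D.IsExternal v →
      ∃ h₀, D.fiber v = {h₀} ∧ (D.lab h₀ = Fld.B ∨ D.lab h₀ = Fld.b) := by
  classical
  obtain ⟨K⟩ := hloop
  haveI : NeZero K.n := ⟨K.npos.ne'⟩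
  open TopYM in
  -- the cycle vertices
  set cv : ZMod K.n → D.V := fun i => D.vtx (K.e i) with hcv
  -- each cycle vertex carries a second half-edge, distinct from `K.e i`
  have two_he : ∀ i, D.vtx (D.mu (K.e (i - 1))) = cv i ∧ D.mu (K.e (i - 1)) ≠ K.e i := by
    intro i
    constructor
    · rw [K.step (i - 1), hcv]
      congr 2
      exact sub_add_cancel i 1
    · intro hco
      by_cases hii : i - 1 = i
      · rw [hii] at hco; exact D.mu_ne (K.e i) hco
      · exact (K.edges_distinct i (i - 1) (fun he => hii he.symm)).2 hco.symm
  -- each cycle vertex is an interaction vertex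
  have cyc_int : ∀ i, D.labels (cv i) ∈ vertexTypes := by
    intro i
    rcases D.vtx_ok (cv i) with h | ⟨h0, hh0⟩
    · exact h
    · exfalso
      have h1 : K.e i ∈ D.fiber (cv i) := (mem_fiber D).mpr rfl
      have h2 : D.mu (K.e (i - 1)) ∈ D.fiber (cv i) := (mem_fiber D).mpr (two_he i).1
      have hf : D.fiber (cv i) = {h0} := hh0
      rw [hf, Finset.mem_singleton] at h1 h2
      exact (two_he i).2 (h2.trans h1.symm)
  -- the negative half-edge of edge `j`, and the index of the vertex carrying it
  set nh : ZMod K.n → D.H :=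
    fun j => if isNeg (D.lab (K.e j)) = true then K.e j else D.mu (K.e j) with hnh
  set tv : ZMod K.n → ZMod K.n :=
    fun j => if isNeg (D.lab (K.e j)) = true then j else j + 1 with htv
  have ei : ∀ k, isNeg (D.lab (K.e k)) = true → nh k = K.e k := fun k hk => if_pos hk
  have ei' : ∀ k, ¬ isNeg (D.lab (K.e k)) = true → nh k = D.mu (K.e k) :=
    fun k hk => if_neg hk
  have ti : ∀ k, isNeg (D.lab (K.e k)) = true → tv k = k := fun k hk => if_pos hk
  have ti' : ∀ k, ¬ isNeg (D.lab (K.e k)) = true → tv k = k + 1 := fun k hk => if_neg hk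
  have nh_neg : ∀ j, isNeg (D.lab (nh j)) = true := by
    intro j
    by_cases hj : isNeg (D.lab (K.e j)) = true
    · rw [ei j hj]; exact hj
    · rw [ei' j hj]; exact mu_neg D hj
  have nh_vtx : ∀ j, D.vtx (nh j) = cv (tv j) := by
    intro j
    by_cases hj : isNeg (D.lab (K.e j)) = true
    · rw [ei j hj, ti j hj]
    · rw [ei' j hj, ti' j hj]; exact K.step j
  -- pigeonhole: `tv` is injective, hence surjective
  have tv_inj : Function.Injective tv := by
    intro i j hij
    by_contra hne
    have hv : D.vtx (nh i) = D.vtx (nh j) := by rw [nh_vtx, nh_vtx, hij]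
    have h1 : nh i = nh j :=
      neg_unique D hv rfl (nh_neg i) (nh_neg j)
    have hd := K.edges_distinct i j hne
    by_cases hi : isNeg (D.lab (K.e i)) = true <;>
      by_cases hj' : isNeg (D.lab (K.e j)) = true
    · rw [ei i hi, ei j hj'] at h1; exact hd.1 h1
    · rw [ei i hi, ei' j hj'] at h1; exact hd.2 h1
    · rw [ei' i hi, ei j hj'] at h1
      exact hd.2 (by rw [← h1, D.mu_invol (K.e i)])
    · rw [ei' i hi, ei' j hj'] at h1; exact hd.1 (D.mu_invol.injective h1)
  have tv_surj : Function.Surjective tv :=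
    Finite.injective_iff_surjective.mp tv_inj
  -- the negative half-edge of each cycle vertex leads back into the cycle
  have cyc_neg_in : ∀ i, ∃ h, D.vtx h = cv i ∧ isNeg (D.lab h) = true ∧
      ∃ k, D.vtx (D.mu h) = cv k := by
    intro i
    obtain ⟨j, hj⟩ := tv_surj i
    refine ⟨nh j, by rw [nh_vtx, hj], nh_neg j, ?_⟩
    by_cases hc : isNeg (D.lab (K.e j)) = true
    · refine ⟨j + 1, ?_⟩
      rw [ei j hc]
      exact K.step j
    · refine ⟨j, ?_⟩
      rw [ei' j hc, D.mu_invol (K.e j)]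
  -- every reachable vertex has a negative half-edge whose partner is reachable
  have reach_pred : ∀ v, Reach D K v →
      ∃ h, D.vtx h = v ∧ isNeg (D.lab h) = true ∧ Reach D K (D.vtx (D.mu h)) := by
    rintro v ⟨i, hi⟩
    rcases hi.cases_tail with rfl | ⟨u, hu, hdir⟩
    · obtain ⟨h, hv, hn, k, hk⟩ := cyc_neg_in i
      exact ⟨h, hv, hn, ⟨k, by rw [hk]⟩⟩
    · obtain ⟨h, hhu, hhv, hn⟩ := hdir
      refine ⟨D.mu h, hhv, hn, ?_⟩
      rw [D.mu_invol, hhu]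
      exact ⟨i, hu⟩
  -- reachability is closed under (undirected) adjacency
  have reach_adj : ∀ x y, Reach D K x → D.Adj x y → Reach D K y := by
    rintro x y hx ⟨h, hhx, hhy⟩
    by_cases hn : isNeg (D.lab (D.mu h)) = true
    · obtain ⟨i, hi⟩ := hx
      exact ⟨i, hi.tail ⟨h, hhx, hhy, hn⟩⟩
    · have hneg : isNeg (D.lab h) = true := by
        have := neg_mu D h
        cases hb : isNeg (D.lab h) <;> simp_all
      obtain ⟨h', hv', hn', hr'⟩ := reach_pred x hx
      have he : h = h' := neg_unique D hhx hv' hneg hn'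
      rw [← hhy, he]
      exact hr'
  -- every vertex is reachable, hence carries a negative half-edge
  have all_reach : ∀ v, Reach D K v := by
    intro v
    have hpath := hconn (cv 0) v
    induction hpath with
    | refl => exact ⟨0, Relation.ReflTransGen.refl⟩
    | tail hp hadj ih => exact reach_adj _ _ ih hadj
  have all_neg : ∀ v, ∃ h, D.vtx h = v ∧ isNeg (D.lab h) = true := by
    intro v
    obtain ⟨h, a, b, _⟩ := reach_pred v (all_reach v)
    exact ⟨h, a, b⟩
  -- the total weight vanishes
  have hsum0 : (∑ h : D.H, wt (D.lab h)) = 0 := by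
    have h1 : (∑ h : D.H, wt (D.lab (D.mu h))) = ∑ h : D.H, wt (D.lab h) :=
      Fintype.sum_equiv D.mu_invol.toPerm _ _ (fun h => rfl)
    have h2 : (∑ h : D.H, (wt (D.lab h) + wt (D.lab (D.mu h)))) = 0 :=
      Finset.sum_eq_zero fun h _ => wt_mu D h
    rw [Finset.sum_add_distrib, h1] at h2
    linarith
  -- grouped by vertex
  have hfib : (∑ v : D.V, ∑ h ∈ D.fiber v, wt (D.lab h)) = 0 := by
    rw [← hsum0]
    exact Finset.sum_fiberwise Finset.univ D.vtx (fun h => wt (D.lab h))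
  -- each vertex contributes a nonpositive amount
  have hT_nonpos : ∀ v ∈ (Finset.univ : Finset D.V),
      (∑ h ∈ D.fiber v, wt (D.lab h)) ≤ 0 := by
    intro v _
    rcases D.vtx_ok v with hi | ⟨h0, hh0⟩
    · have hz := vtype_wt _ hi
      have : (∑ h ∈ D.fiber v, wt (D.lab h))
          = (Multiset.map wt (D.labels v)).sum := by
        rw [Diagram.labels, Multiset.map_map]
        rfl
      rw [this]
      exact le_of_eq hz
    · have hf : D.fiber v = {h0} := hh0
      obtain ⟨h, hv, hn⟩ := all_neg v
      have : h = h0 := by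
        have := (mem_fiber D).mpr hv
        rwa [hf, Finset.mem_singleton] at this
      subst this
      rw [hf, Finset.sum_singleton]
      exact neg_wt_nonpos _ hn
  have hTz := (Finset.sum_eq_zero_iff_of_nonpos hT_nonpos).mp hfib
  -- conclusion
  intro v hv
  obtain ⟨h0, hh0⟩ := hv
  refine ⟨h0, hh0, ?_⟩
  obtain ⟨h, hhv, hneg⟩ := all_neg v
  have hmem : h ∈ D.fiber v := (mem_fiber D).mpr hhv
  have he : h = h0 := by rwa [hh0, Finset.mem_singleton] at hmem
  subst he
  have hz : wt (D.lab h) = 0 := by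
    have := hTz v (Finset.mem_univ v)
    rwa [hh0, Finset.sum_singleton] at this
  exact neg_wt_zero _ hneg hz
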